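/- Fix a > 0 and H ∈ (0,1) with H ≠ 1/2. Then K(t) · Γ(H−1/2) · a · t^{3/2−H} → 1 as t → ∞; equivalently, K(t) = (1/(Γ(H−1/2) a^{H−1/2})) ( (a t)^{H−3/2} + o( (a t)^{H−3/2} ) ) as t → ∞. -/

import Mathlib

open MeasureTheory Real Set Filter Topology

lemma fou_intgOn' (a β : ℝ) {c d : ℝ} (hc : 0 < c) (hcd : c ≤ d) :
    IntervalIntegrable (fun u : ℝ => u ^ β * Real.exp (a * u)) volume c d := by
  apply ContinuousOn.intervalIntegrable
  apply ContinuousOn.mul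
  · refine continuousOn_id.rpow_const (fun x hx => Or.inl ?_)
    rw [Set.uIcc_of_le hcd] at hx
    intro h; simp only [id] at h; rw [h] at hx; exact absurd hx.1 (by linarith)
  · exact (Real.continuous_exp.comp (continuous_const.mul continuous_id)).continuousOn

lemma fou_intgOn (a β : ℝ) {t : ℝ} (ht : 1 ≤ t) :
    IntervalIntegrable (fun u : ℝ => u ^ β * Real.exp (a * u)) volume 1 t :=
  fou_intgOn' a β one_pos ht

lemma fou_key (a β : ℝ) {t : ℝ} (ht : 1 ≤ t) :
    a * ∫ u in (1:ℝ)..t, u ^ β * Real.exp (a * u)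
      = t ^ β * Real.exp (a * t) - Real.exp a
        - β * ∫ u in (1:ℝ)..t, u ^ (β - 1) * Real.exp (a * u) := by
  have hderiv : ∀ u ∈ Set.uIcc (1:ℝ) t,
      HasDerivAt (fun x : ℝ => x ^ β * Real.exp (a * x))
        (β * u ^ (β - 1) * Real.exp (a * u) + u ^ β * (Real.exp (a * u) * a)) u := by
    intro u hu
    have hu0 : u ≠ 0 := by
      rw [Set.uIcc_of_le ht] at hu
      intro h; rw [h] at hu; exact absurd hu.1 (by norm_num)
    have h1 : HasDerivAt (fun x : ℝ => x ^ β) (β * u ^ (β - 1)) u := by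
      simpa [mul_comm] using Real.hasDerivAt_rpow_const (Or.inl hu0) (x := u) (p := β)
    have h2 : HasDerivAt (fun x : ℝ => Real.exp (a * x)) (Real.exp (a * u) * a) u := by
      have := ((hasDerivAt_id u).const_mul a).exp
      simpa using this
    exact h1.mul h2
  have hint : IntervalIntegrable
      (fun u : ℝ => β * u ^ (β - 1) * Real.exp (a * u) + u ^ β * (Real.exp (a * u) * a))
      volume 1 t := by
    refine IntervalIntegrable.add ?_ ?_
    · simpa [mul_assoc] using (fou_intgOn a (β - 1) ht).const_mul β
    · simpa [mul_assoc, mul_comm, mul_left_comm] using (fou_intgOn a β ht).const_mul a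
  have hftc := intervalIntegral.integral_eq_sub_of_hasDerivAt hderiv hint
  have e0 : ∀ u : ℝ, β * u ^ (β - 1) * Real.exp (a * u) + u ^ β * (Real.exp (a * u) * a)
      = β * (u ^ (β - 1) * Real.exp (a * u)) + (u ^ β * Real.exp (a * u)) * a := by
    intro u; ring
  simp only [e0] at hftc
  rw [intervalIntegral.integral_add ((fou_intgOn a (β - 1) ht).const_mul β)
      ((fou_intgOn a β ht).mul_const a), intervalIntegral.integral_const_mul,
      intervalIntegral.integral_mul_const] at hftc
  rw [Real.one_rpow, mul_one, one_mul] at hftc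
  linarith

lemma fou_exp_int (a : ℝ) (ha : 0 < a) (c d : ℝ) :
    ∫ u in c..d, Real.exp (a * u) = (Real.exp (a * d) - Real.exp (a * c)) / a := by
  have hderiv : ∀ u ∈ Set.uIcc c d,
      HasDerivAt (fun x : ℝ => Real.exp (a * x) / a) (Real.exp (a * u)) u := by
    intro u _
    have h2 : HasDerivAt (fun x : ℝ => Real.exp (a * x)) (Real.exp (a * u) * a) u := by
      simpa using ((hasDerivAt_id u).const_mul a).exp
    have := h2.div_const a
    simpa [mul_div_assoc, mul_div_cancel_right₀ _ ha.ne'] using this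
  have hint : IntervalIntegrable (fun u : ℝ => Real.exp (a * u)) volume c d :=
    ((Real.continuous_exp.comp (continuous_const.mul continuous_id)).continuousOn).intervalIntegrable
  have := intervalIntegral.integral_eq_sub_of_hasDerivAt hderiv hint
  rw [this]; ring

lemma fou_bound (a α : ℝ) (ha : 0 < a) (hα : α < 1) {t : ℝ} (ht : 2 ≤ t) :
    ∫ u in (1:ℝ)..t, u ^ (α - 2) * Real.exp (a * u)
      ≤ t * Real.exp (a * (t / 2)) + (t / 2) ^ (α - 2) * Real.exp (a * t) / a := by
  have h1 : (1:ℝ) ≤ t / 2 := by linarith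
  have h2 : t / 2 ≤ t := by linarith
  have hsplit : ∫ u in (1:ℝ)..t, u ^ (α - 2) * Real.exp (a * u)
      = (∫ u in (1:ℝ)..(t/2), u ^ (α - 2) * Real.exp (a * u))
        + ∫ u in (t/2)..t, u ^ (α - 2) * Real.exp (a * u) :=
    (intervalIntegral.integral_add_adjacent_intervals (fou_intgOn a (α - 2) h1)
      (fou_intgOn' a (α - 2) (by linarith) h2)).symm
  rw [hsplit]
  have piece1 : (∫ u in (1:ℝ)..(t/2), u ^ (α - 2) * Real.exp (a * u))
      ≤ t * Real.exp (a * (t / 2)) := by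
    have : (∫ u in (1:ℝ)..(t/2), u ^ (α - 2) * Real.exp (a * u))
        ≤ ∫ _u in (1:ℝ)..(t/2), Real.exp (a * (t / 2)) := by
      apply intervalIntegral.integral_mono_on h1 (fou_intgOn a (α - 2) h1)
        intervalIntegrable_const
      intro x hx
      have hx1 : (1:ℝ) ≤ x := hx.1
      calc x ^ (α - 2) * Real.exp (a * x) ≤ 1 * Real.exp (a * (t/2)) := by
            apply mul_le_mul (Real.rpow_le_one_of_one_le_of_nonpos hx1 (by linarith))
              (Real.exp_le_exp.mpr (by nlinarith [hx.2])) (Real.exp_pos _).le zero_le_one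
        _ = Real.exp (a * (t/2)) := one_mul _
    refine this.trans ?_
    rw [intervalIntegral.integral_const, smul_eq_mul]
    have := (Real.exp_pos (a * (t/2))).le
    nlinarith
  have piece2 : (∫ u in (t/2)..t, u ^ (α - 2) * Real.exp (a * u))
      ≤ (t / 2) ^ (α - 2) * Real.exp (a * t) / a := by
    have step : (∫ u in (t/2)..t, u ^ (α - 2) * Real.exp (a * u))
        ≤ ∫ u in (t/2)..t, (t / 2) ^ (α - 2) * Real.exp (a * u) := by
      apply intervalIntegral.integral_mono_on h2 (fou_intgOn' a (α - 2) (by linarith) h2)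
        ((((Real.continuous_exp.comp (continuous_const.mul continuous_id)).continuousOn).const_smul ((t/2) ^ (α-2))).intervalIntegrable)
      intro x hx
      have hx0 : (0:ℝ) < t / 2 := by linarith
      exact mul_le_mul_of_nonneg_right
        (Real.rpow_le_rpow_of_nonpos hx0 hx.1 (by linarith)) (Real.exp_pos _).le
    refine step.trans ?_
    rw [intervalIntegral.integral_const_mul, fou_exp_int a ha]
    have hpow : (0:ℝ) ≤ (t / 2) ^ (α - 2) := Real.rpow_nonneg (by linarith) _
    rw [mul_div_assoc]
    apply mul_le_mul_of_nonneg_left _ hpow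
    have h0 : Real.exp (a * t) - Real.exp (a * (t/2)) ≤ Real.exp (a * t) := by
      linarith [(Real.exp_pos (a * (t/2))).le]
    exact div_le_div_of_nonneg_right h0 ha.le
  linarith

/-- The moving-average kernel of the fractional Ornstein–Uhlenbeck process. -/
noncomputable def fouKernel (a H : ℝ) (t : ℝ) : ℝ :=
  (1 / Real.Gamma (H + 1/2)) *
    (t ^ (H - 1/2) - a * ∫ s in (0:ℝ)..t, (t - s) ^ (H - 1/2) * Real.exp (-a * s))

theorem fouKernel_asymptotics_infinity (a H : ℝ) (ha : 0 < a)
    (hH : H ∈ Set.Ioo (0:ℝ) 1) (hH' : H ≠ 1/2) :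
    Tendsto (fun t : ℝ => fouKernel a H t * Real.Gamma (H - 1/2) * a * t ^ (3/2 - H))
      atTop (𝓝 1) := by
  obtain ⟨hH0, hH1⟩ := hH
  obtain ⟨α, hα⟩ : ∃ x : ℝ, x = H - 1/2 := ⟨_, rfl⟩
  rw [show H - 1/2 = α from hα.symm]
  have hα0 : α ≠ 0 := fun h => hH' (by rw [hα] at h; linarith)
  have hαlt : α < 1/2 := by rw [hα]; linarith
  have hαgt : -(1/2) < α := by rw [hα]; linarith
  have hΓne : Real.Gamma α ≠ 0 := by
    apply Real.Gamma_ne_zero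
    intro m
    match m with
    | 0 => simpa using hα0
    | (n+1) => intro h; rw [h] at hαgt; push_cast at hαgt; linarith [Nat.cast_nonneg (α := ℝ) n]
  have hΓ1 : Real.Gamma (H + 1/2) = α * Real.Gamma α := by
    have h : H + 1/2 = α + 1 := by rw [hα]; ring
    rw [h, Real.Gamma_add_one hα0]
  set J1 : ℝ := ∫ u in (0:ℝ)..1, u ^ α * Real.exp (a * u) with hJ1
  set c : ℝ := a * (Real.exp a - a * J1) - α * Real.exp a with hc
  set Y : ℝ → ℝ := fun t => t ^ (1 - α) * Real.exp (-(a * t)) with hY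
  set P2 : ℝ → ℝ := fun t => ∫ u in (1:ℝ)..t, u ^ (α - 2) * Real.exp (a * u) with hP2
  -- limit L1
  have L1 : Tendsto Y atTop (𝓝 0) := by
    have := tendsto_rpow_mul_exp_neg_mul_atTop_nhds_zero (1 - α) a ha
    refine this.congr fun t => ?_
    rw [hY]; simp [neg_mul]
  -- limit L2
  have L2 : Tendsto (fun t => Y t * P2 t) atTop (𝓝 0) := by
    have g1 : Tendsto (fun t : ℝ => t ^ (2 - α) * Real.exp (-(a/2) * t)) atTop (𝓝 0) :=
      tendsto_rpow_mul_exp_neg_mul_atTop_nhds_zero (2 - α) (a/2) (by linarith)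
    have g2 : Tendsto (fun t : ℝ => (2:ℝ) ^ (2 - α) / a * t⁻¹) atTop (𝓝 0) := by
      simpa using tendsto_inv_atTop_zero.const_mul ((2:ℝ) ^ (2 - α) / a)
    have g := g1.add g2
    rw [add_zero] at g
    apply squeeze_zero' ?_ ?_ g
    · filter_upwards [eventually_ge_atTop 2] with t ht
      have ht1 : (1:ℝ) ≤ t := by linarith
      have ht0 : (0:ℝ) < t := by linarith
      apply mul_nonneg (mul_nonneg (Real.rpow_nonneg ht0.le _) (Real.exp_pos _).le)
      apply intervalIntegral.integral_nonneg ht1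
      intro u hu
      exact mul_nonneg (Real.rpow_nonneg (by linarith [hu.1]) _) (Real.exp_pos _).le
    · filter_upwards [eventually_ge_atTop 2] with t ht
      have ht0 : (0:ℝ) < t := by linarith
      have hb := fou_bound a α ha (hαlt.trans (by norm_num)) ht
      have hYpos : 0 ≤ Y t := mul_nonneg (Real.rpow_nonneg ht0.le _) (Real.exp_pos _).le
      have step : Y t * P2 t ≤ Y t * (t * Real.exp (a * (t/2)) + (t/2) ^ (α-2) * Real.exp (a*t) / a) :=
        mul_le_mul_of_nonneg_left hb hYpos
      refine step.trans (le_of_eq ?_)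
      rw [hY]
      have hexp1 : Real.exp (-(a*t)) * Real.exp (a * (t/2)) = Real.exp (-(a/2)*t) := by
        rw [← Real.exp_add]; congr 1; ring
      have hpow1 : t ^ (1-α) * t = t ^ (2-α) := by
        nth_rewrite 2 [show t = t ^ (1:ℝ) from (Real.rpow_one t).symm]
        rw [← Real.rpow_add ht0]
        congr 1; ring
      have e1 : t ^ (1-α) * Real.exp (-(a*t)) * (t * Real.exp (a * (t/2)))
          = t ^ (2-α) * Real.exp (-(a/2) * t) := by
        calc t ^ (1-α) * Real.exp (-(a*t)) * (t * Real.exp (a * (t/2)))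
            = (t ^ (1-α) * t) * (Real.exp (-(a*t)) * Real.exp (a * (t/2))) := by ring
          _ = t ^ (2-α) * Real.exp (-(a/2) * t) := by rw [hpow1, hexp1]
      have e2 : t ^ (1-α) * Real.exp (-(a*t)) * ((t/2) ^ (α-2) * Real.exp (a*t) / a)
          = (2:ℝ) ^ (2-α) / a * t⁻¹ := by
        have hEE : Real.exp (-(a*t)) * Real.exp (a*t) = 1 := by
          rw [← Real.exp_add]; simp
        have hhalf : ((t:ℝ)/2) ^ (α-2) = t ^ (α-2) * (2:ℝ) ^ (2-α) := by
          rw [Real.div_rpow ht0.le (by norm_num), div_eq_mul_inv, ← Real.rpow_neg (by norm_num)]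
          norm_num
        have ht' : t ^ (1-α) * t ^ (α-2) = t⁻¹ := by
          rw [← Real.rpow_add ht0, show (1-α) + (α-2) = -1 by ring, Real.rpow_neg_one]
        calc t ^ (1-α) * Real.exp (-(a*t)) * ((t/2) ^ (α-2) * Real.exp (a*t) / a)
            = (t ^ (1-α) * t ^ (α-2)) * (Real.exp (-(a*t)) * Real.exp (a*t)) * (2:ℝ)^(2-α) / a := by
              rw [hhalf]; ring
          _ = (2:ℝ) ^ (2-α) / a * t⁻¹ := by rw [hEE, ht']; ring
      rw [mul_add, e1, e2]
  -- integrability on [0,1]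
  have hJ1int : IntervalIntegrable (fun u : ℝ => u ^ α * Real.exp (a * u)) volume 0 1 := by
    apply (intervalIntegral.intervalIntegrable_rpow' (by linarith : (-1:ℝ) < α)).mul_continuousOn
    exact (Real.continuous_exp.comp (continuous_const.mul continuous_id)).continuousOn
  -- pointwise identity for t ≥ 1
  have key : ∀ᶠ t in atTop, α * (fouKernel a H t * Real.Gamma α * a * t ^ (3/2 - H))
      = α + c * Y t + α * (1 - α) * (Y t * P2 t) := by
    filter_upwards [eventually_ge_atTop 1] with t ht1
    have ht0 : (0:ℝ) < t := by linarith
    have hI : (∫ s in (0:ℝ)..t, (t - s) ^ α * Real.exp (-a * s))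
        = Real.exp (-(a*t)) * (J1 + ∫ u in (1:ℝ)..t, u ^ α * Real.exp (a * u)) := by
      have hcongr : (∫ s in (0:ℝ)..t, (t - s) ^ α * Real.exp (-a * s))
          = ∫ s in (0:ℝ)..t, Real.exp (-(a*t)) * ((t - s) ^ α * Real.exp (a * (t - s))) := by
        apply intervalIntegral.integral_congr
        intro s _
        show (t - s) ^ α * Real.exp (-a * s)
            = Real.exp (-(a*t)) * ((t - s) ^ α * Real.exp (a * (t - s)))
        have hx : Real.exp (-(a*t)) * Real.exp (a * (t - s)) = Real.exp (-a * s) := by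
          rw [← Real.exp_add]; congr 1; ring
        rw [← hx]; ring
      rw [hcongr, intervalIntegral.integral_const_mul]
      congr 1
      have hsub := intervalIntegral.integral_comp_sub_left (a := (0:ℝ)) (b := t)
        (fun u => u ^ α * Real.exp (a * u)) t
      simp only [sub_self, sub_zero] at hsub
      rw [hsub]
      exact (intervalIntegral.integral_add_adjacent_intervals hJ1int (fou_intgOn a α ht1)).symm
    set Pa : ℝ := ∫ u in (1:ℝ)..t, u ^ α * Real.exp (a * u) with hPa
    set Pa1 : ℝ := ∫ u in (1:ℝ)..t, u ^ (α - 1) * Real.exp (a * u) with hPa1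
    have k1 := fou_key a α ht1
    have k2 := fou_key a (α - 1) ht1
    rw [show α - 1 - 1 = α - 2 from by ring] at k2
    rw [← hPa, ← hPa1] at k1
    rw [← hPa1] at k2
    have hEE : Real.exp (-(a*t)) * Real.exp (a*t) = 1 := by
      rw [← Real.exp_add]; simp
    have hYZ : t ^ (1-α) * t ^ (α-1) = 1 := by
      rw [← Real.rpow_add ht0, show (1-α) + (α-1) = 0 from by ring, Real.rpow_zero]
    simp only [fouKernel]
    rw [← hα, hΓ1, show (3/2 - H : ℝ) = 1 - α from by rw [hα]; ring, hI]
    simp only [hY, hP2, hc]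
    have cancel : ∀ W : ℝ, α * (1 / (α * Real.Gamma α) * W * Real.Gamma α * a * t ^ (1-α))
        = W * (a * t ^ (1-α)) := by
      intro W; field_simp
    rw [show α * (1 / (α * Real.Gamma α) * (t ^ α - a * (Real.exp (-(a*t)) * (J1 + Pa)))
          * Real.Gamma α * a * t ^ (1-α))
        = (t ^ α - a * (Real.exp (-(a*t)) * (J1 + Pa))) * (a * t ^ (1-α)) from cancel _]
    have e1 : (t ^ α - a * (Real.exp (-(a*t)) * (J1 + Pa))) * (a * t ^ (1-α))
        = a * (Real.exp a - a * J1) * (t ^ (1-α) * Real.exp (-(a*t)))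
          + α * (a * (t ^ (1-α) * Real.exp (-(a*t)) * Pa1)) := by
      linear_combination (-(a * t ^ (1-α) * Real.exp (-(a*t)))) * k1
        + (-(a * t ^ (1-α) * t ^ α)) * hEE
    have e2 : α * (a * (t ^ (1-α) * Real.exp (-(a*t)) * Pa1))
        = α - α * Real.exp a * (t ^ (1-α) * Real.exp (-(a*t)))
          - α * (α - 1) * (t ^ (1-α) * Real.exp (-(a*t))
            * ∫ u in (1:ℝ)..t, u ^ (α - 2) * Real.exp (a * u)) := by
      linear_combination (α * t ^ (1-α) * Real.exp (-(a*t))) * k2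
        + (α * Real.exp (a*t) * Real.exp (-(a*t))) * hYZ + α * hEE
    linear_combination e1 + e2
  -- conclusion
  have lim0 : Tendsto (fun t => α + c * Y t + α * (1 - α) * (Y t * P2 t)) atTop
      (𝓝 (α + c * 0 + α * (1 - α) * 0)) :=
    (tendsto_const_nhds.add (L1.const_mul c)).add (L2.const_mul (α * (1 - α)))
  have T : Tendsto (fun t => α * (fouKernel a H t * Real.Gamma α * a * t ^ (3/2 - H)))
      atTop (𝓝 α) := by
    refine Tendsto.congr' ?_ (by simpa using lim0)
    filter_upwards [key] with t h
    exact h.symm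
  have T2 := T.const_mul α⁻¹
  rw [inv_mul_cancel₀ hα0] at T2
  refine T2.congr fun t => ?_
  rw [inv_mul_cancel_left₀ hα0]
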